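/- There is no continuous map g : D² → S¹ from the closed unit disk to the circle whose restriction to the boundary circle S¹ is antipode-preserving, i.e. satisfies g(-t) = -g(t) for all t ∈ S¹. -/

import Mathlib

open Complex Set Metric

noncomputable section BorsukUlamAux

private lemma abs_min_sub_min (x a b : ℝ) : |min x a - min x b| ≤ |a - b| := by
  rw [abs_sub_le_iff]
  rcases le_total x a with h | h <;> rcases le_total x b with h' | h' <;>
    simp only [min_eq_left, min_eq_right, h, h'] <;>
    constructor <;> cases abs_cases (a - b) <;> linarith

private lemma intValued_constOn {a b : ℝ} {w : ℝ → ℝ} (hw : ContinuousOn w (Icc a b))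
    (hint : ∀ x ∈ Icc a b, ∃ k : ℤ, w x = k) {x y : ℝ}
    (hx : x ∈ Icc a b) (hy : y ∈ Icc a b) : w x = w y := by
  by_contra hne
  obtain ⟨kx, hkx⟩ := hint x hx
  obtain ⟨ky, hky⟩ := hint y hy
  have hsub : uIcc x y ⊆ Icc a b := uIcc_subset_Icc hx hy
  have hk : kx ≠ ky := by rintro rfl; exact hne (hkx.trans hky.symm)
  have hge : (1:ℝ) ≤ |(kx:ℝ) - ky| := by
    have : (1:ℤ) ≤ |kx - ky| := Int.one_le_abs (sub_ne_zero.mpr hk)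
    calc (1:ℝ) = ((1:ℤ):ℝ) := by norm_num
    _ ≤ ((|kx - ky| : ℤ) : ℝ) := by exact_mod_cast this
    _ = |(kx:ℝ) - ky| := by rw [Int.cast_abs, Int.cast_sub]
  have hmid : min (w x) (w y) + 1/2 ∈ uIcc (w x) (w y) := by
    rcases le_total (w x) (w y) with h | h <;> rw [Set.mem_uIcc] <;>
      [left; right] <;> constructor <;>
      simp [min_eq_left, min_eq_right, h] <;>
      · rw [hkx, hky] at h ⊢; cases abs_cases ((kx:ℝ) - ky) <;> linarith
  obtain ⟨z, hz, hwz⟩ := intermediate_value_uIcc (hw.mono hsub) hmid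
  obtain ⟨kz, hkz⟩ := hint z (hsub hz)
  rcases le_total (w x) (w y) with h | h
  · rw [hkz, min_eq_left h, hkx] at hwz
    have h2 : (2*kz : ℝ) = 2*kx + 1 := by linarith
    have : (2*kz : ℤ) = 2*kx + 1 := by exact_mod_cast h2
    omega
  · rw [hkz, min_eq_right h, hky] at hwz
    have h2 : (2*kz : ℝ) = 2*ky + 1 := by linarith
    have : (2*kz : ℤ) = 2*ky + 1 := by exact_mod_cast h2
    omega

private lemma prod_range_div' (f : ℕ → ℂ) (hf : ∀ k, f k ≠ 0) (n : ℕ) :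
    ∏ k ∈ Finset.range n, f (k + 1) / f k = f n / f 0 := by
  induction n with
  | zero => simp [div_self (hf 0)]
  | succ n ih =>
    rw [Finset.prod_range_succ, ih, div_mul_div_comm, mul_comm (f 0) (f n),
      mul_div_mul_left _ _ (hf n)]

private lemma exp_I_inj {x y : ℝ} (h : Complex.exp ((x:ℂ) * I) = Complex.exp ((y:ℂ) * I)) :
    ∃ k : ℤ, x = y + 2 * Real.pi * k := by
  obtain ⟨k, hk⟩ := Complex.exp_eq_exp_iff_exists_int.mp h
  refine ⟨k, ?_⟩
  have h2 : (x : ℂ) * I = ((y + 2 * Real.pi * k : ℝ) : ℂ) * I := by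
    push_cast
    rw [hk]; ring
  have := mul_right_cancel₀ Complex.I_ne_zero h2
  exact_mod_cast this

private lemma exp_arg_eq {z : ℂ} (hz : ‖z‖ = 1) :
    Complex.exp ((z.arg : ℂ) * I) = z := by
  have h := Complex.norm_mul_exp_arg_mul_I z
  rwa [hz, Complex.ofReal_one, one_mul] at h


private lemma slit_of_close {z w : ℂ} (hw : ‖w‖ = 1)
    (h : ‖z - w‖ < 1) : z / w ∈ Complex.slitPlane := by
  have hw0 : w ≠ 0 := by intro h0; rw [h0] at hw; simp at hw
  have h1 : ‖z / w - 1‖ < 1 := by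
    have he : z / w - 1 = (z - w) / w := by field_simp
    rw [he, norm_div, hw, div_one]
    exact h
  rw [Complex.mem_slitPlane_iff]
  left
  have h2 := (Complex.abs_re_le_norm (z / w - 1)).trans_lt h1
  rw [Complex.sub_re, Complex.one_re] at h2
  have h3 := abs_sub_lt_iff.mp h2
  linarith [h3.2]

private lemma exists_lift (H : ℝ × ℝ → ℂ) (hu : UniformContinuous H)
    (habs : ∀ p, ‖H p‖ = 1) :
    ∃ Θ : ℝ × ℝ → ℝ, Continuous Θ ∧
      ∀ r ∈ Icc (0:ℝ) 1, ∀ s ∈ Icc (0:ℝ) 1,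
        H (r, s) = Complex.exp ((Θ (r, s) : ℂ) * I) := by
  have hne : ∀ p, H p ≠ 0 := by
    intro p h0
    have h := habs p
    rw [h0] at h; simp at h
  obtain ⟨δ, hδpos, hδ⟩ := Metric.uniformContinuous_iff.mp hu 1 one_pos
  obtain ⟨n, hn⟩ := exists_nat_one_div_lt hδpos
  set m : ℕ := n + 1 with hm
  set N : ℝ := ((m : ℕ) : ℝ) with hNdef
  have hNpos : (0:ℝ) < N := by rw [hNdef, hm]; positivity
  have hNn : (1:ℝ) / N < δ := by rw [hNdef, hm]; push_cast; exact hn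
  have key : ∀ p q : ℝ × ℝ, dist p q ≤ 1 / N → H p / H q ∈ Complex.slitPlane := by
    intro p q hpq
    refine slit_of_close (habs q) ?_
    rw [← Complex.dist_eq]
    exact hδ (lt_of_le_of_lt hpq hNn)
  have hstep : ∀ k : ℕ, |((k+1:ℕ):ℝ)/N - ((k:ℕ):ℝ)/N| ≤ 1/N := by
    intro k
    have h1 : ((k+1:ℕ):ℝ)/N - ((k:ℕ):ℝ)/N = 1/N := by push_cast; ring
    rw [h1]
    exact le_of_eq (abs_of_nonneg (by positivity))
  have hd1 : ∀ (x : ℝ) (k : ℕ),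
      dist ((min x (((k+1:ℕ):ℝ) / N), (0:ℝ))) ((min x (((k:ℕ):ℝ) / N), (0:ℝ))) ≤ 1 / N := by
    intro x k
    rw [Prod.dist_eq]
    simp only [dist_self, Real.dist_eq]
    rw [max_eq_left (abs_nonneg _)]
    exact (abs_min_sub_min x _ _).trans (hstep k)
  have hd2 : ∀ (x y : ℝ) (k : ℕ),
      dist ((x, min y (((k+1:ℕ):ℝ) / N))) ((x, min y (((k:ℕ):ℝ) / N))) ≤ 1 / N := by
    intro x y k
    rw [Prod.dist_eq]
    simp only [dist_self, Real.dist_eq]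
    rw [max_eq_right (abs_nonneg _)]
    exact (abs_min_sub_min y _ _).trans (hstep k)
  refine ⟨fun p =>
    (H (0, 0)).arg
    + ∑ k ∈ Finset.range m,
        (H (min p.1 (((k+1:ℕ):ℝ) / N), 0) / H (min p.1 (((k:ℕ):ℝ) / N), 0)).arg
    + ∑ k ∈ Finset.range m,
        (H (p.1, min p.2 (((k+1:ℕ):ℝ) / N)) / H (p.1, min p.2 (((k:ℕ):ℝ) / N))).arg,
    ?_, ?_⟩
  · -- continuity
    have argc : ∀ f : ℝ × ℝ → ℂ, Continuous f → (∀ p, f p ∈ Complex.slitPlane) →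
        Continuous fun p => (f p).arg := fun f hf hs =>
      continuous_iff_continuousAt.mpr fun p => (Complex.continuousAt_arg (hs p)).comp hf.continuousAt
    have hHc : Continuous H := hu.continuous
    refine (continuous_const.add (continuous_finset_sum _ fun k _ => argc _ ?_ ?_)).add
      (continuous_finset_sum _ fun k _ => argc _ ?_ ?_)
    · exact ((hHc.comp ((continuous_fst.min continuous_const).prodMk continuous_const)).div
        (hHc.comp ((continuous_fst.min continuous_const).prodMk continuous_const))
        (fun p => hne _))
    · exact fun p => key _ _ (hd1 p.1 k)
    · exact ((hHc.comp (continuous_fst.prodMk (continuous_snd.min continuous_const))).div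
        (hHc.comp (continuous_fst.prodMk (continuous_snd.min continuous_const)))
        (fun p => hne _))
    · exact fun p => key _ _ (hd2 p.1 p.2 k)
  · -- the lifting identity
    intro r hr s hs
    have habs_div : ∀ p q : ℝ × ℝ, ‖H p / H q‖ = 1 := by
      intro p q; rw [norm_div, habs, habs]; norm_num
    have hsum : ∀ u : ℕ → ℝ × ℝ,
        Complex.exp ((↑(∑ k ∈ Finset.range m, (H (u (k+1)) / H (u k)).arg) : ℂ) * I)
          = H (u m) / H (u 0) := by
      intro u
      have hc : ((↑(∑ k ∈ Finset.range m, (H (u (k+1)) / H (u k)).arg) : ℂ))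
          = ∑ k ∈ Finset.range m, (((H (u (k+1)) / H (u k)).arg : ℝ) : ℂ) := by
        push_cast; rfl
      rw [hc, Finset.sum_mul, Complex.exp_sum]
      rw [Finset.prod_congr rfl (fun k _ => exp_arg_eq (habs_div _ _))]
      exact prod_range_div' (fun k => H (u k)) (fun k => hne _) m
    have e1 := hsum (fun k => (min r (((k:ℕ):ℝ) / N), 0))
    have e2 := hsum (fun k => (r, min s (((k:ℕ):ℝ) / N)))
    have hmN : ((m:ℕ):ℝ) / N = 1 := by rw [← hNdef]; exact div_self (ne_of_gt hNpos)
    have h0N : (((0:ℕ)):ℝ) / N = 0 := by simp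
    rw [hmN, h0N, min_eq_left hr.2, min_eq_right hr.1] at e1
    rw [hmN, h0N, min_eq_left hs.2, min_eq_right hs.1] at e2
    beta_reduce
    rw [Complex.ofReal_add, Complex.ofReal_add, add_mul, add_mul, Complex.exp_add,
      Complex.exp_add, exp_arg_eq (habs (0,0)), e1, e2]
    field_simp
    rw [mul_assoc, mul_div_assoc, div_self (mul_ne_zero (hne (0,0)) (hne (r,0))), mul_one]


private abbrev E2 := EuclideanSpace ℝ (Fin 2)

private noncomputable def rho : ℂ ≃ₗᵢ[ℝ] E2 := Complex.orthonormalBasisOneI.repr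

private noncomputable def cl (x : ℝ) : ℝ := min (max x 0) 1

private lemma cl_mem (x : ℝ) : cl x ∈ Icc (0:ℝ) 1 :=
  ⟨le_min (le_max_right x 0) zero_le_one, min_le_right _ _⟩

private lemma cl_eq {x : ℝ} (hx : x ∈ Icc (0:ℝ) 1) : cl x = x := by
  rw [cl, max_eq_left hx.1, min_eq_left hx.2]

private lemma cl_lip (x y : ℝ) : |cl x - cl y| ≤ |x - y| := by
  have h : LipschitzWith 1 cl := (LipschitzWith.id.max_const 0).min_const 1
  have h2 := h.dist_le_mul x y
  simpa [Real.dist_eq] using h2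

private noncomputable def circPt (b : ℝ) : ℂ := Complex.exp (((2 * Real.pi * b : ℝ) : ℂ) * I)

private lemma abs_circPt (b : ℝ) : ‖circPt b‖ = 1 :=
  Complex.norm_exp_ofReal_mul_I _

private lemma norm_rho_circPt (b : ℝ) : ‖rho (circPt b)‖ = 1 := by
  rw [rho.norm_map, abs_circPt]

private lemma circPt_zero : circPt 0 = 1 := by
  rw [circPt]; norm_num

private lemma circPt_one : circPt 1 = 1 := by
  rw [circPt, show ((2 * Real.pi * 1 : ℝ) : ℂ) * I = 2 * (Real.pi : ℂ) * I by push_cast; ring]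
  exact Complex.exp_two_pi_mul_I

private lemma circPt_add_half (s : ℝ) : circPt (s + 1/2) = -circPt s := by
  rw [circPt, circPt,
    show ((2 * Real.pi * (s + 1/2) : ℝ) : ℂ) * I
      = ((2 * Real.pi * s : ℝ) : ℂ) * I + (Real.pi : ℂ) * I by push_cast; ring,
    Complex.exp_add, Complex.exp_pi_mul_I, mul_neg_one]

private lemma pt_mem (a b : ℝ) : cl a • rho (circPt (cl b)) ∈ closedBall (0:E2) 1 := by
  rw [mem_closedBall_zero_iff, norm_smul, norm_rho_circPt, mul_one, Real.norm_eq_abs,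
    _root_.abs_of_nonneg (cl_mem a).1]
  exact (cl_mem a).2

private noncomputable def HH (G : C(closedBall (0:E2) 1, sphere (0:E2) 1)) (p : ℝ × ℝ) : ℂ :=
  rho.symm (G ⟨cl p.1 • rho (circPt (cl p.2)), pt_mem p.1 p.2⟩)

private lemma abs_HH (G : C(closedBall (0:E2) 1, sphere (0:E2) 1)) (p : ℝ × ℝ) :
    ‖HH G p‖ = 1 := by
  rw [HH, rho.symm.norm_map]
  exact mem_sphere_zero_iff_norm.mp (G _).2

private lemma HH_congr (G : C(closedBall (0:E2) 1, sphere (0:E2) 1)) {p q : ℝ × ℝ}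
    (h : cl p.1 • rho (circPt (cl p.2)) = cl q.1 • rho (circPt (cl q.2))) :
    HH G p = HH G q := by
  have he : (⟨cl p.1 • rho (circPt (cl p.2)), pt_mem p.1 p.2⟩ : closedBall (0:E2) 1)
      = ⟨cl q.1 • rho (circPt (cl q.2)), pt_mem q.1 q.2⟩ := Subtype.ext h
  rw [HH, HH, he]

private lemma HH_cont (G : C(closedBall (0:E2) 1, sphere (0:E2) 1)) : Continuous (HH G) := by
  have hcl : Continuous cl := (continuous_id.max continuous_const).min continuous_const
  have hcirc : Continuous circPt := by
    apply Complex.continuous_exp.comp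
    exact (Complex.continuous_ofReal.comp (by continuity)).mul continuous_const
  have hpt : Continuous fun p : ℝ × ℝ => cl p.1 • rho (circPt (cl p.2)) :=
    (hcl.comp continuous_fst).smul
      (rho.continuous.comp (hcirc.comp (hcl.comp continuous_snd)))
  exact rho.symm.continuous.comp
    ((continuous_subtype_val.comp (G.continuous.comp (hpt.subtype_mk _))))

private lemma HH_unif (G : C(closedBall (0:E2) 1, sphere (0:E2) 1)) :
    UniformContinuous (HH G) := by
  rw [Metric.uniformContinuous_iff]
  intro ε hε
  have hK : IsCompact (Icc (0:ℝ) 1 ×ˢ Icc (0:ℝ) 1) := isCompact_Icc.prod isCompact_Icc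
  obtain ⟨δ, hδpos, hδ⟩ := Metric.uniformContinuousOn_iff.mp
    (hK.uniformContinuousOn_of_continuous (HH_cont G).continuousOn) ε hε
  refine ⟨δ, hδpos, fun p q hpq => ?_⟩
  have h1 : HH G p = HH G (cl p.1, cl p.2) := by
    refine HH_congr G ?_
    simp only [cl_eq (cl_mem p.1), cl_eq (cl_mem p.2)]
  have h2 : HH G q = HH G (cl q.1, cl q.2) := by
    refine HH_congr G ?_
    simp only [cl_eq (cl_mem q.1), cl_eq (cl_mem q.2)]
  rw [h1, h2]
  refine hδ _ ⟨cl_mem p.1, cl_mem p.2⟩ _ ⟨cl_mem q.1, cl_mem q.2⟩ ?_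
  rw [Prod.dist_eq] at hpq ⊢
  have := max_lt_iff.mp hpq
  rw [Real.dist_eq, Real.dist_eq] at this ⊢
  exact max_lt ((cl_lip _ _).trans_lt this.1) ((cl_lip _ _).trans_lt this.2)



private lemma HH_eq (G : C(closedBall (0:E2) 1, sphere (0:E2) 1)) (p : ℝ × ℝ) {v : E2}
    (hv : v ∈ closedBall (0:E2) 1)
    (h : cl p.1 • rho (circPt (cl p.2)) = v) : HH G p = rho.symm (G ⟨v, hv⟩) := by
  subst h; rfl


end BorsukUlamAux

/-- There is no continuous map from the closed unit disk D² to the circle S¹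
whose restriction to the boundary circle is antipode-preserving. -/
theorem no_disk_to_circle_odd_on_boundary :
    ¬ ∃ g : C(Metric.closedBall (0 : EuclideanSpace ℝ (Fin 2)) 1,
              Metric.sphere (0 : EuclideanSpace ℝ (Fin 2)) 1),
      ∀ t : Metric.sphere (0 : EuclideanSpace ℝ (Fin 2)) 1,
        g ⟨((-t : Metric.sphere (0 : EuclideanSpace ℝ (Fin 2)) 1) :
              EuclideanSpace ℝ (Fin 2)),
            Metric.sphere_subset_closedBall (-t).2⟩
          = -(g ⟨(t : EuclideanSpace ℝ (Fin 2)),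
                 Metric.sphere_subset_closedBall t.2⟩) := by
  rintro ⟨g, hg⟩
  obtain ⟨Θ, hΘc, hΘ⟩ := exists_lift (HH g) (HH_unif g) (abs_HH g)
  have two_pi_ne : (2 * Real.pi) ≠ 0 := by positivity
  have hc1 : cl (1:ℝ) = 1 := cl_eq (by norm_num)
  have hc0 : cl (0:ℝ) = 0 := cl_eq (by norm_num)
  have h01 : (0:ℝ) ∈ Icc (0:ℝ) 1 := by norm_num
  have h11 : (1:ℝ) ∈ Icc (0:ℝ) 1 := by norm_num
  -- basic boundary facts
  have hF1 : ∀ r : ℝ, HH g (r, 1) = HH g (r, 0) := fun r => HH_congr g (by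
    show cl r • rho (circPt (cl 1)) = cl r • rho (circPt (cl 0))
    rw [hc1, hc0, circPt_one, circPt_zero])
  have hF2 : ∀ s : ℝ, HH g (0, s) = HH g (0, 0) := fun s => HH_congr g (by
    show cl 0 • rho (circPt (cl s)) = cl 0 • rho (circPt (cl 0))
    rw [hc0, zero_smul, zero_smul])
  have hF3 : ∀ x : ℝ, x ∈ Icc (0:ℝ) (1/2) → HH g (1, x + 1/2) = -HH g (1, x) := by
    intro x hx
    have hx1 : x ∈ Icc (0:ℝ) 1 := ⟨hx.1, by linarith [hx.2]⟩
    have hx2 : x + 1/2 ∈ Icc (0:ℝ) 1 := ⟨by linarith [hx.1], by linarith [hx.2]⟩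
    set t : sphere (0:E2) 1 := ⟨rho (circPt x), mem_sphere_zero_iff_norm.mpr (norm_rho_circPt x)⟩
      with ht
    have hpt1 : cl (1:ℝ) • rho (circPt (cl (x + 1/2))) = ((-t : sphere (0:E2) 1) : E2) := by
      rw [hc1, one_smul, cl_eq hx2, circPt_add_half, map_neg]
      rfl
    have hpt2 : cl (1:ℝ) • rho (circPt (cl x)) = (t : E2) := by
      rw [hc1, one_smul, cl_eq hx1]
    have e1 : HH g (1, x + 1/2)
        = rho.symm ((g ⟨((-t : sphere (0:E2) 1) : E2), sphere_subset_closedBall (-t).2⟩ :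
            sphere (0:E2) 1) : E2) :=
      HH_eq g (1, x + 1/2) (sphere_subset_closedBall (-t).2) hpt1
    have e2 : HH g (1, x)
        = rho.symm ((g ⟨(t : E2), sphere_subset_closedBall t.2⟩ : sphere (0:E2) 1) : E2) :=
      HH_eq g (1, x) (sphere_subset_closedBall t.2) hpt2
    rw [e1, e2, hg t]
    rw [show ((-(g ⟨(t:E2), sphere_subset_closedBall t.2⟩) : sphere (0:E2) 1) : E2)
        = -((g ⟨(t:E2), sphere_subset_closedBall t.2⟩ : sphere (0:E2) 1) : E2) from rfl, map_neg]
  -- Step A : Θ (0, ·) is constant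
  have hcontA : ContinuousOn (fun x : ℝ => (Θ (0, x) - Θ (0, 0)) / (2 * Real.pi))
      (Icc (0:ℝ) 1) :=
    (((hΘc.comp (continuous_const.prodMk continuous_id)).sub continuous_const).div_const
      _).continuousOn
  have hintA : ∀ x ∈ Icc (0:ℝ) 1, ∃ k : ℤ,
      (Θ (0, x) - Θ (0, 0)) / (2 * Real.pi) = k := by
    intro x hx
    have ex : Complex.exp ((Θ (0, x) : ℂ) * I) = Complex.exp ((Θ (0, 0) : ℂ) * I) := by
      rw [← hΘ 0 h01 x hx, ← hΘ 0 h01 0 h01]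
      exact hF2 x
    obtain ⟨k, hk⟩ := exp_I_inj ex
    exact ⟨k, by rw [hk]; field_simp; ring⟩
  have hA : Θ (0, 1) = Θ (0, 0) := by
    have h := intValued_constOn hcontA hintA h11 h01
    rw [sub_self, zero_div, div_eq_zero_iff] at h
    rcases h with h | h
    · linarith [h]
    · exact absurd h two_pi_ne
  -- Step B : winding number of boundary loop is 0
  have hcontB : ContinuousOn (fun r : ℝ => (Θ (r, 1) - Θ (r, 0)) / (2 * Real.pi))
      (Icc (0:ℝ) 1) :=
    (((hΘc.comp (continuous_id.prodMk continuous_const)).sub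
      (hΘc.comp (continuous_id.prodMk continuous_const))).div_const _).continuousOn
  have hintB : ∀ r ∈ Icc (0:ℝ) 1, ∃ k : ℤ,
      (Θ (r, 1) - Θ (r, 0)) / (2 * Real.pi) = k := by
    intro r hr
    have ex : Complex.exp ((Θ (r, 1) : ℂ) * I) = Complex.exp ((Θ (r, 0) : ℂ) * I) := by
      rw [← hΘ r hr 1 h11, ← hΘ r hr 0 h01]
      exact hF1 r
    obtain ⟨k, hk⟩ := exp_I_inj ex
    exact ⟨k, by rw [hk]; field_simp; ring⟩
  have hB : Θ (1, 1) = Θ (1, 0) := by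
    have h := intValued_constOn hcontB hintB h11 h01
    rw [hA, sub_self, zero_div, div_eq_zero_iff] at h
    rcases h with h | h
    · linarith [h]
    · exact absurd h two_pi_ne
  -- Step C : oddness gives odd winding number, contradiction
  have hmem12 : ∀ x ∈ Icc (0:ℝ) (1/2), x ∈ Icc (0:ℝ) 1 ∧ x + 1/2 ∈ Icc (0:ℝ) 1 := by
    intro x hx
    exact ⟨⟨hx.1, by linarith [hx.2]⟩, ⟨by linarith [hx.1], by linarith [hx.2]⟩⟩
  have hcontC : ContinuousOn
      (fun x : ℝ => (Θ (1, x + 1/2) - Θ (1, x) - Real.pi) / (2 * Real.pi))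
      (Icc (0:ℝ) (1/2)) :=
    ((((hΘc.comp (continuous_const.prodMk (continuous_id.add continuous_const))).sub
      (hΘc.comp (continuous_const.prodMk continuous_id))).sub continuous_const).div_const
      _).continuousOn
  have hintC : ∀ x ∈ Icc (0:ℝ) (1/2), ∃ k : ℤ,
      (Θ (1, x + 1/2) - Θ (1, x) - Real.pi) / (2 * Real.pi) = k := by
    intro x hx
    obtain ⟨hx1, hx2⟩ := hmem12 x hx
    have ex : Complex.exp ((Θ (1, x + 1/2) : ℂ) * I)
        = Complex.exp (((Θ (1, x) + Real.pi : ℝ) : ℂ) * I) := by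
      rw [← hΘ 1 h11 (x + 1/2) hx2]
      rw [show (((Θ (1, x) + Real.pi : ℝ)) : ℂ) * I = (Θ (1, x) : ℂ) * I + (Real.pi : ℂ) * I by
        push_cast; ring]
      rw [Complex.exp_add, Complex.exp_pi_mul_I, mul_neg_one, ← hΘ 1 h11 x hx1]
      exact hF3 x hx
    obtain ⟨k, hk⟩ := exp_I_inj ex
    exact ⟨k, by rw [hk]; field_simp; ring⟩
  have h0mem : (0:ℝ) ∈ Icc (0:ℝ) (1/2) := by norm_num
  have h12mem : (1/2:ℝ) ∈ Icc (0:ℝ) (1/2) := by norm_num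
  obtain ⟨k0, hk0⟩ := hintC 0 h0mem
  obtain ⟨k1, hk1⟩ := hintC (1/2) h12mem
  have heq := intValued_constOn hcontC hintC h0mem h12mem
  have hkk : (k0 : ℝ) = (k1 : ℝ) := by rw [← hk0, ← hk1]; exact heq
  have hkz : k0 = k1 := by exact_mod_cast hkk
  subst hkz
  -- turn divisions into linear equations
  have ha : Θ (1, 0 + 1/2) = Θ (1, 1/2) := by norm_num
  have hb : Θ (1, 1/2 + 1/2) = Θ (1, 1) := by norm_num
  rw [ha] at hk0
  rw [hb, hB] at hk1
  have hk0' : Θ (1, 1/2) - Θ (1, 0) - Real.pi = k0 * (2 * Real.pi) := by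
    field_simp at hk0
    linarith [hk0]
  have hk1' : Θ (1, 0) - Θ (1, 1/2) - Real.pi = k0 * (2 * Real.pi) := by
    field_simp at hk1
    linarith [hk1]
  have hfin : (2 + 4 * (k0:ℝ)) * Real.pi = 0 := by linarith
  rcases mul_eq_zero.mp hfin with h | h
  · have : (2 + 4 * k0 : ℤ) = 0 := by exact_mod_cast h
    omega
  · exact Real.pi_ne_zero h
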